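/- Let R be a ring and P a two-sided ideal of R. Then P is an almost prime right ideal of R if and only if P/P² is a weakly prime right ideal of the quotient ring R/P². -/

import Mathlib

variable {R : Type*}

/-- `P` is a right ideal of the (possibly nonunital, noncommutative) ring `R`. -/
def IsRightIdeal [NonUnitalRing R] (P : AddSubgroup R) : Prop :=
  ∀ a ∈ P, ∀ r : R, a * r ∈ P

/-- The product `AB` of two right ideals: the additive subgroup generated by products. -/
def idealMul [NonUnitalRing R] (A B : AddSubgroup R) : AddSubgroup R :=
  AddSubgroup.closure {x : R | ∃ a ∈ A, ∃ b ∈ B, x = a * b}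

/-- `P` is a weakly prime right ideal. -/
def IsWeaklyPrimeRight [NonUnitalRing R] (P : AddSubgroup R) : Prop :=
  IsRightIdeal P ∧ P ≠ ⊤ ∧
    ∀ A B : AddSubgroup R, IsRightIdeal A → IsRightIdeal B →
      idealMul A B ≠ ⊥ → idealMul A B ≤ P → A ≤ P ∨ B ≤ P

/-- `P` is an almost prime right ideal. -/
def IsAlmostPrimeRight [NonUnitalRing R] (P : AddSubgroup R) : Prop :=
  IsRightIdeal P ∧ P ≠ ⊤ ∧
    ∀ A B : AddSubgroup R, IsRightIdeal A → IsRightIdeal B →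
      idealMul A B ≤ P → ¬ idealMul A B ≤ idealMul P P → A ≤ P ∨ B ≤ P

/-- `P` is a two-sided ideal of `R`. -/
def IsTwoSidedIdealSub [NonUnitalRing R] (P : AddSubgroup R) : Prop :=
  ∀ a ∈ P, ∀ r : R, a * r ∈ P ∧ r * a ∈ P

/-- The ring congruence associated to a two-sided-ideal additive subgroup `N`. -/
def ringConOf [NonUnitalRing R] (N : AddSubgroup R)
    (hr : ∀ x ∈ N, ∀ r : R, x * r ∈ N) (hl : ∀ x ∈ N, ∀ r : R, r * x ∈ N) : RingCon R where
  r x y := x - y ∈ N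
  iseqv := ⟨fun x => by simpa using N.zero_mem, fun {x y} h => by simpa using N.neg_mem h,
    fun {x y z} h1 h2 => by simpa using N.add_mem h1 h2⟩
  add' := fun {a b c d} h1 h2 => by
    have h1' : a - b ∈ N := h1
    have h2' : c - d ∈ N := h2
    show a + c - (b + d) ∈ N
    rw [add_sub_add_comm]
    exact N.add_mem h1' h2'
  mul' := fun {a b c d} h1 h2 => by
    have h1' : a - b ∈ N := h1
    have h2' : c - d ∈ N := h2
    show a * c - b * d ∈ N
    have h3 : (a - b) * c ∈ N := hr _ h1' c
    have h4 : b * (c - d) ∈ N := hl _ h2' b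
    have h5 := N.add_mem h3 h4
    have e : (a - b) * c + b * (c - d) = a * c - b * d := by
      rw [sub_mul, mul_sub]; abel
    rwa [e] at h5

/-- The quotient map `R → R/N` as an additive monoid homomorphism. -/
def qmap [NonUnitalRing R] (c : RingCon R) : R →+ c.Quotient where
  toFun x := x
  map_zero' := rfl
  map_add' _ _ := rfl

theorem sq_right [NonUnitalRing R] (P : AddSubgroup R) (hP : IsTwoSidedIdealSub P) :
    ∀ x ∈ idealMul P P, ∀ r : R, x * r ∈ idealMul P P := by
  intro x hx r
  induction hx using AddSubgroup.closure_induction with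
  | mem y hy =>
    obtain ⟨a, ha, b, hb, rfl⟩ := hy
    exact AddSubgroup.subset_closure ⟨a, ha, b * r, (hP b hb r).1, mul_assoc a b r⟩
  | zero => simpa using (idealMul P P).zero_mem
  | add x y _ _ ihx ihy =>
    rw [add_mul]; exact (idealMul P P).add_mem ihx ihy
  | neg x _ ih =>
    rw [neg_mul]; exact (idealMul P P).neg_mem ih

theorem sq_left [NonUnitalRing R] (P : AddSubgroup R) (hP : IsTwoSidedIdealSub P) :
    ∀ x ∈ idealMul P P, ∀ r : R, r * x ∈ idealMul P P := by
  intro x hx r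
  induction hx using AddSubgroup.closure_induction with
  | mem y hy =>
    obtain ⟨a, ha, b, hb, rfl⟩ := hy
    exact AddSubgroup.subset_closure ⟨r * a, (hP a ha r).2, b, hb, (mul_assoc r a b).symm⟩
  | zero => simpa using (idealMul P P).zero_mem
  | add x y _ _ ihx ihy =>
    rw [mul_add]; exact (idealMul P P).add_mem ihx ihy
  | neg x _ ih =>
    rw [mul_neg]; exact (idealMul P P).neg_mem ih

theorem qmap_surjective [NonUnitalRing R] (c : RingCon R) :
    Function.Surjective (qmap c) :=
  fun x => Quot.inductionOn x fun a => ⟨a, rfl⟩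

theorem qmap_mul [NonUnitalRing R] (c : RingCon R) (a b : R) :
    qmap c (a * b) = qmap c a * qmap c b := rfl

theorem map_idealMul [NonUnitalRing R] (c : RingCon R) (A B : AddSubgroup R) :
    (idealMul A B).map (qmap c) = idealMul (A.map (qmap c)) (B.map (qmap c)) := by
  unfold idealMul
  rw [AddMonoidHom.map_closure]
  congr 1
  ext x
  constructor
  · rintro ⟨y, ⟨a, ha, b, hb, rfl⟩, rfl⟩
    exact ⟨qmap c a, ⟨a, ha, rfl⟩, qmap c b, ⟨b, hb, rfl⟩, rfl⟩
  · rintro ⟨-, ⟨a, ha, rfl⟩, -, ⟨b, hb, rfl⟩, rfl⟩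
    exact ⟨a * b, ⟨a, ha, b, hb, rfl⟩, rfl⟩

theorem idealMul_le_self [NonUnitalRing R] {P : AddSubgroup R} (hP : IsRightIdeal P) :
    idealMul P P ≤ P := by
  apply (AddSubgroup.closure_le _).mpr
  rintro x ⟨a, ha, b, hb, rfl⟩
  exact hP a ha b

/-- A two-sided ideal `P` of `R` is an almost prime right ideal iff
`P/P²` is a weakly prime right ideal of `R/P²`. -/
theorem almostPrime_iff_quotient_weaklyPrime [NonUnitalRing R] (P : AddSubgroup R)
    (hP : IsTwoSidedIdealSub P) :
    IsAlmostPrimeRight P ↔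
      IsWeaklyPrimeRight
        (AddSubgroup.map
          (qmap (ringConOf (idealMul P P) (sq_right P hP) (sq_left P hP))) P) := by
  set N := idealMul P P with hNdef
  set c := ringConOf N (sq_right P hP) (sq_left P hP) with hcdef
  set φ := qmap c with hφdef
  have hPright : IsRightIdeal P := fun a ha r => (hP a ha r).1
  have hNP : N ≤ P := idealMul_le_self hPright
  have hsurj : Function.Surjective φ := qmap_surjective c
  have hker : ∀ y : R, φ y = 0 ↔ y ∈ N := by
    intro y
    have h0 : (0 : c.Quotient) = φ (0 : R) := rfl
    rw [h0]
    show (y : c.Quotient) = (0 : R) ↔ _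
    rw [RingCon.eq]
    show y - 0 ∈ N ↔ y ∈ N
    rw [sub_zero]
  have hmemP : ∀ y : R, φ y ∈ P.map φ ↔ y ∈ P := by
    intro y
    constructor
    · rintro ⟨p, hp, hpy⟩
      have : c p y := (RingCon.eq _).mp hpy
      have hsub : p - y ∈ N := this
      have : y = p - (p - y) := (sub_sub_cancel p y).symm
      rw [this]
      exact P.sub_mem hp (hNP hsub)
    · intro hy
      exact ⟨y, hy, rfl⟩
  constructor
  · rintro ⟨hPr, hPne, hmain⟩
    refine ⟨?_, ?_, ?_⟩
    · -- right ideal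
      rintro a ⟨p, hp, rfl⟩ s
      obtain ⟨r, rfl⟩ := hsurj s
      rw [← qmap_mul]
      exact ⟨p * r, hPr p hp r, rfl⟩
    · -- proper
      intro htop
      apply hPne
      rw [eq_top_iff]
      intro x _
      exact (hmemP x).mp (htop ▸ AddSubgroup.mem_top (φ x))
    · intro A B hA hB hne hle
      set A' := A.comap φ with hA'def
      set B' := B.comap φ with hB'def
      have hmapA' : A'.map φ = A := by
        rw [AddSubgroup.map_comap_eq_self]
        rw [AddMonoidHom.range_eq_top_of_surjective φ hsurj]
        exact le_top
      have hmapB' : B'.map φ = B := by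
        rw [AddSubgroup.map_comap_eq_self]
        rw [AddMonoidHom.range_eq_top_of_surjective φ hsurj]
        exact le_top
      have hA'r : IsRightIdeal A' := by
        intro a ha r
        show φ (a * r) ∈ A
        rw [qmap_mul]
        exact hA _ ha _
      have hB'r : IsRightIdeal B' := by
        intro a ha r
        show φ (a * r) ∈ B
        rw [qmap_mul]
        exact hB _ ha _
      have hmapmul : (idealMul A' B').map φ = idealMul A B := by
        rw [map_idealMul, hmapA', hmapB']
      have hle' : idealMul A' B' ≤ P := by
        intro x hx
        have : φ x ∈ idealMul A B := hmapmul ▸ ⟨x, hx, rfl⟩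
        exact (hmemP x).mp (hle this)
      have hnsq : ¬ idealMul A' B' ≤ idealMul P P := by
        intro hsq
        apply hne
        rw [eq_bot_iff, ← hmapmul]
        rintro - ⟨x, hx, rfl⟩
        exact (hker x).mpr (hsq hx)
      rcases hmain A' B' hA'r hB'r hle' hnsq with h | h
      · left
        rw [← hmapA']
        rintro - ⟨x, hx, rfl⟩
        exact ⟨x, h hx, rfl⟩
      · right
        rw [← hmapB']
        rintro - ⟨x, hx, rfl⟩
        exact ⟨x, h hx, rfl⟩
  · rintro ⟨-, hPne, hmain⟩
    refine ⟨hPright, ?_, ?_⟩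
    · rintro rfl
      apply hPne
      rw [eq_top_iff]
      intro x _
      obtain ⟨y, rfl⟩ := hsurj x
      exact ⟨y, trivial, rfl⟩
    · intro A B hA hB hle hnsq
      have hAr : IsRightIdeal (A.map φ) := by
        rintro a ⟨x, hx, rfl⟩ s
        obtain ⟨r, rfl⟩ := hsurj s
        rw [← qmap_mul]
        exact ⟨x * r, hA x hx r, rfl⟩
      have hBr : IsRightIdeal (B.map φ) := by
        rintro a ⟨x, hx, rfl⟩ s
        obtain ⟨r, rfl⟩ := hsurj s
        rw [← qmap_mul]
        exact ⟨x * r, hB x hx r, rfl⟩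
      have hlem : idealMul (A.map φ) (B.map φ) ≤ P.map φ := by
        rw [← map_idealMul]
        rintro - ⟨x, hx, rfl⟩
        exact ⟨x, hle hx, rfl⟩
      have hnbot : idealMul (A.map φ) (B.map φ) ≠ ⊥ := by
        intro hbot
        apply hnsq
        intro x hx
        have : φ x ∈ idealMul (A.map φ) (B.map φ) := by
          rw [← map_idealMul]; exact ⟨x, hx, rfl⟩
        rw [hbot] at this
        exact (hker x).mp this
      rcases hmain (A.map φ) (B.map φ) hAr hBr hnbot hlem with h | h
      · left
        intro x hx
        exact (hmemP x).mp (h ⟨x, hx, rfl⟩)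
      · right
        intro x hx
        exact (hmemP x).mp (h ⟨x, hx, rfl⟩)
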